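/- Let B be a binomially distributed random variable with parameters n ∈ ℕ and p ∈ (0, 1]. Then for every α ∈ (0, 1] and every m ∈ ℕ ∪ {0}, E(B^(-αm) · 1{B > 0}) ≤ ( 2^(m(m+1)/2) · [1 - (1-p)^(n+m)] / ( p^m · ∏_{i=1}^m (n+i) ) )^α ≤ 2^(α·m(m+1)/2) / (p·n)^(α·m), where the product ∏_{i=1}^m (n+i) is interpreted as 1 when m = 0. -/

import Mathlib

open Finset

lemma choose_prod_id (n m k : ℕ) :
    (n.choose k : ℝ) * ∏ i ∈ Icc 1 m, ((n:ℝ) + i) =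
      ((n + m).choose (k + m) : ℝ) * ∏ i ∈ Icc 1 m, ((k:ℝ) + i) := by
  induction m with
  | zero => simp
  | succ m ih =>
      rw [Finset.prod_Icc_succ_top (Nat.le_add_left 1 m),
          Finset.prod_Icc_succ_top (Nat.le_add_left 1 m)]
      have h : (n + (m+1)).choose (k + (m+1)) * (k + (m+1)) = (n + (m+1)) * (n+m).choose (k+m) := by
        have := (Nat.add_one_mul_choose_eq (n+m) (k+m)).symm
        simpa [Nat.succ_eq_add_one, ← add_assoc, mul_comm] using this
      have hc : ((n + (m+1)).choose (k + (m+1)) : ℝ) * ((k:ℝ) + (m+1)) =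
          ((n:ℝ) + (m+1)) * ((n+m).choose (k+m) : ℝ) := by exact_mod_cast h
      push_cast
      push_cast at ih hc
      linear_combination ((n:ℝ) + (m+1)) * ih + (∏ i ∈ Icc 1 m, ((k:ℝ) + i)) * hc.symm


lemma gauss_icc (m : ℕ) : ∑ i ∈ Icc 1 m, i = m * (m + 1) / 2 := by
  have h2 : (∑ i ∈ Icc 1 m, i) * 2 = m * (m + 1) := by
    induction m with
    | zero => simp
    | succ m ih => rw [Finset.sum_Icc_succ_top (Nat.le_add_left 1 m), add_mul, ih]; ring
  generalize hT : m * (m + 1) = t at *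
  omega

lemma prod_le_pow (m k : ℕ) (hk : 1 ≤ k) :
    (∏ i ∈ Icc 1 m, ((k:ℝ) + i)) ≤ 2 ^ (m * (m + 1) / 2) * (k:ℝ) ^ m := by
  have hk1 : (1:ℝ) ≤ (k:ℝ) := by exact_mod_cast hk
  calc (∏ i ∈ Icc 1 m, ((k:ℝ) + i))
      ≤ ∏ i ∈ Icc 1 m, ((2:ℝ) ^ i * k) := by
        apply Finset.prod_le_prod
        · intro i hi; positivity
        · intro i hi
          have hi1 : 1 ≤ i := (Finset.mem_Icc.1 hi).1
          have h2 : (i:ℝ) + 1 ≤ (2:ℝ) ^ i := by exact_mod_cast (Nat.lt_two_pow_self (n := i))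
          nlinarith [hk1, (by exact_mod_cast hi1 : (1:ℝ) ≤ (i:ℝ))]
    _ = 2 ^ (m * (m + 1) / 2) * (k:ℝ) ^ m := by
        rw [Finset.prod_mul_distrib, Finset.prod_pow_eq_pow_sum, gauss_icc,
          Finset.prod_const, Nat.card_Icc]
        norm_num

lemma jensen_aux {ι : Type*} (s : Finset ι) (w x : ι → ℝ)
    (hw : ∀ i ∈ s, 0 ≤ w i) (hx : ∀ i ∈ s, 0 ≤ x i)
    (hw1 : ∑ i ∈ s, w i ≤ 1) {α : ℝ} (hα0 : 0 < α) (hα1 : α ≤ 1) :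
    ∑ i ∈ s, w i * x i ^ α ≤ (∑ i ∈ s, w i * x i) ^ α := by
  set S := ∑ i ∈ s, w i * x i with hS
  have hS0 : 0 ≤ S := Finset.sum_nonneg fun i hi => mul_nonneg (hw i hi) (hx i hi)
  rcases eq_or_lt_of_le hS0 with h0 | hpos
  · have hz := (Finset.sum_eq_zero_iff_of_nonneg
      (fun i hi => mul_nonneg (hw i hi) (hx i hi))).1 h0.symm
    have hzz : ∑ i ∈ s, w i * x i ^ α = 0 := by
      apply Finset.sum_eq_zero
      intro i hi
      rcases mul_eq_zero.1 (hz i hi) with h | h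
      · simp [h]
      · simp [h, Real.zero_rpow hα0.ne']
    rw [hzz, ← h0, Real.zero_rpow hα0.ne']
  · have hSα : 0 < S ^ α := Real.rpow_pos_of_pos hpos _
    have key : ∀ i ∈ s, w i * x i ^ α ≤ S ^ α * (w i * (α * (x i / S) + (1 - α))) := by
      intro i hi
      have h1 : x i ^ α = (x i / S) ^ α * S ^ α := by
        rw [Real.div_rpow (hx i hi) hS0]
        field_simp
      have h2 : (x i / S) ^ α ≤ α * (x i / S) + (1 - α) := by
        have := Real.geom_mean_le_arith_mean2_weighted hα0.le (by linarith : (0:ℝ) ≤ 1 - α)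
          (div_nonneg (hx i hi) hS0) zero_le_one (by ring)
        simpa [Real.one_rpow] using this
      rw [h1]
      have := mul_le_mul_of_nonneg_left h2 (hw i hi)
      nlinarith [hw i hi, hSα.le, mul_le_mul_of_nonneg_left h2 (hw i hi)]
    calc ∑ i ∈ s, w i * x i ^ α
        ≤ ∑ i ∈ s, S ^ α * (w i * (α * (x i / S) + (1 - α))) := Finset.sum_le_sum key
      _ = S ^ α * (α / S * S + (1 - α) * ∑ i ∈ s, w i) := by
          rw [← Finset.mul_sum]
          congr 1
          simp only [show ∀ i, w i * (α * (x i / S) + (1 - α))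
                = α / S * (w i * x i) + (1 - α) * w i from fun i => by field_simp]
          rw [Finset.sum_add_distrib, ← Finset.mul_sum, ← Finset.mul_sum, ← hS]
      _ ≤ S ^ α * 1 := by
          apply mul_le_mul_of_nonneg_left _ hSα.le
          rw [div_mul_cancel₀ _ hpos.ne']
          nlinarith [hw1]
      _ = S ^ α := mul_one _

lemma sumB (n m : ℕ) (p : ℝ) (hp0 : 0 < p) (hp1 : p ≤ 1) :
    ∑ k ∈ range (n+1), (if 0 < k then (∏ i ∈ Icc 1 m, ((k:ℝ)+i))⁻¹ else 0) *
        ((n.choose k : ℝ) * p^k * (1-p)^(n-k))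
      ≤ (1 - (1-p)^(n+m)) / (p^m * ∏ i ∈ Icc 1 m, ((n:ℝ)+i)) := by
  set q : ℝ := 1 - p with hq
  have hq0 : 0 ≤ q := by simp [hq]; linarith
  set N := n + m with hN
  set g : ℕ → ℝ := fun j => (N.choose j : ℝ) * p^j * q^(N-j) with hg
  have hP : ∀ k : ℕ, 0 < ∏ i ∈ Icc 1 m, ((k:ℝ)+i) := by
    intro k
    apply Finset.prod_pos
    intro i hi
    have : 1 ≤ i := (Finset.mem_Icc.1 hi).1
    have : (1:ℝ) ≤ (i:ℝ) := by exact_mod_cast this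
    positivity
  have hterm : ∀ k ∈ range (n+1),
      (if 0 < k then (∏ i ∈ Icc 1 m, ((k:ℝ)+i))⁻¹ else 0) *
        ((n.choose k : ℝ) * p^k * q^(n-k))
      = (if 0 < k then g (k+m) else 0) / (p^m * ∏ i ∈ Icc 1 m, ((n:ℝ)+i)) := by
    intro k hk
    by_cases h : 0 < k
    · simp only [h, if_pos]
      have hid := choose_prod_id n m k
      rw [hg]
      simp only [← hN]
      rw [show N - (k+m) = n - k from by omega]
      rw [pow_add]
      have hpne : p ≠ 0 := hp0.ne'
      have h1 : (∏ i ∈ Icc 1 m, ((k:ℝ)+i)) ≠ 0 := (hP k).ne'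
      have h2 : (∏ i ∈ Icc 1 m, ((n:ℝ)+i)) ≠ 0 := (hP n).ne'
      field_simp
      linear_combination ((1-p)^(n-k)) * hid
    · simp [h]
  rw [Finset.sum_congr rfl hterm, ← Finset.sum_div]
  have hden : 0 < p^m * ∏ i ∈ Icc 1 m, ((n:ℝ)+i) := mul_pos (pow_pos hp0 m) (hP n)
  rw [div_le_div_iff_of_pos_right hden]
  -- numerator bound
  have hg0 : ∀ j, 0 ≤ g j := by
    intro j; rw [hg]; positivity
  have hbin : ∑ j ∈ range (N+1), g j = 1 := by
    have h := add_pow p q N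
    rw [show p + q = 1 from by rw [hq]; ring, one_pow] at h
    rw [show ∑ j ∈ range (N+1), g j = ∑ j ∈ range (N+1), p^j * q^(N-j) * (N.choose j : ℝ) from
      Finset.sum_congr rfl fun j _ => by rw [hg]; ring]
    exact h.symm
  have hsplit := Finset.sum_range_succ' g N
  have hg0' : g 0 = q ^ N := by simp [hg]
  rw [Finset.sum_range_succ' (fun k => if 0 < k then g (k+m) else 0) n]
  simp only [Nat.lt_irrefl, Nat.succ_pos, if_pos, if_neg, lt_self_iff_false, if_false, add_zero]
  have e1 : ∑ i ∈ range n, g (i+1+m) = ∑ i ∈ range n, (fun j => g (j+1)) (m+i) := by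
    refine Finset.sum_congr rfl fun i _ => ?_
    simp only
    rw [show i+1+m = m+i+1 from by omega]
  rw [e1]
  rw [← show (m + n) - m = n from by omega, ← Finset.sum_Ico_eq_sum_range (fun j => g (j+1)) m (m+n)]
  have e2 : ∑ i ∈ Ico m (m+n), g (i+1) ≤ ∑ i ∈ range N, g (i+1) := by
    apply Finset.sum_le_sum_of_subset_of_nonneg
    · rw [Finset.range_eq_Ico]
      exact Finset.Ico_subset_Ico (Nat.zero_le m) (by omega)
    · intro i _ _; exact hg0 _
  refine e2.trans ?_
  have : ∑ i ∈ range N, g (i+1) = 1 - q^N := by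
    rw [← hbin, hsplit, hg0']; ring
  rw [this]

open Finset in
/-- Negative-moment bound for a Binomial(n,p) random variable restricted to {B > 0}. -/
theorem stmt_2 (n : ℕ) (hn : 1 ≤ n) (p : ℝ) (hp0 : 0 < p) (hp1 : p ≤ 1)
    (α : ℝ) (hα0 : 0 < α) (hα1 : α ≤ 1) (m : ℕ) :
    (∑ k ∈ Finset.range (n + 1),
        (if 0 < k then ((k : ℝ) ^ (-(α * m)) : ℝ) else 0) *
          ((n.choose k : ℝ) * p ^ k * (1 - p) ^ (n - k)))
      ≤ ((2 ^ (m * (m + 1) / 2) * (1 - (1 - p) ^ (n + m)) /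
            (p ^ m * ∏ i ∈ Finset.Icc 1 m, ((n : ℝ) + i))) ^ α : ℝ) ∧
    ((2 ^ (m * (m + 1) / 2) * (1 - (1 - p) ^ (n + m)) /
          (p ^ m * ∏ i ∈ Finset.Icc 1 m, ((n : ℝ) + i))) ^ α : ℝ)
      ≤ (2 : ℝ) ^ (α * (m * (m + 1) / 2 : ℕ)) / (p * n) ^ (α * m) := by
  have hq0 : (0:ℝ) ≤ 1 - p := by linarith
  set T : ℕ := m * (m + 1) / 2 with hT
  set w : ℕ → ℝ := fun k => (n.choose k : ℝ) * p ^ k * (1 - p) ^ (n - k) with hw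
  have hwnn : ∀ k, 0 ≤ w k := fun k => by rw [hw]; positivity
  have hP : ∀ k : ℕ, 0 < ∏ i ∈ Icc 1 m, ((k:ℝ)+i) := by
    intro k
    apply Finset.prod_pos
    intro i hi
    have h1 : 1 ≤ i := (Finset.mem_Icc.1 hi).1
    have : (1:ℝ) ≤ (i:ℝ) := by exact_mod_cast h1
    positivity
  set x : ℕ → ℝ := fun k => if 0 < k then (2:ℝ)^T / ∏ i ∈ Icc 1 m, ((k:ℝ)+i) else 0 with hx
  have hxnn : ∀ k, 0 ≤ x k := by
    intro k
    rw [hx]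
    by_cases h : 0 < k
    · simp only [h, if_pos]
      exact div_nonneg (by positivity) (hP k).le
    · simp [h]
  have hsum1 : ∑ k ∈ range (n+1), w k = 1 := by
    have h := add_pow p (1-p) n
    rw [show p + (1-p) = 1 from by ring, one_pow] at h
    rw [show ∑ k ∈ range (n+1), w k = ∑ k ∈ range (n+1), p^k * (1-p)^(n-k) * (n.choose k : ℝ) from
      Finset.sum_congr rfl fun k _ => by rw [hw]; ring]
    exact h.symm
  set X : ℝ := 2 ^ T * (1 - (1 - p) ^ (n + m)) / (p ^ m * ∏ i ∈ Icc 1 m, ((n : ℝ) + i)) with hX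
  have hq1N : (1-p)^(n+m) ≤ 1 := pow_le_one₀ hq0 (by linarith)
  have hXnn : 0 ≤ X := by
    rw [hX]
    apply div_nonneg _ (mul_pos (pow_pos hp0 m) (hP n)).le
    have : (0:ℝ) ≤ 1 - (1-p)^(n+m) := by linarith
    positivity
  constructor
  · -- first inequality
    have step1 : ∀ k ∈ range (n+1),
        (if 0 < k then ((k : ℝ) ^ (-(α * m)) : ℝ) else 0) * w k ≤ w k * (x k) ^ α := by
      intro k _
      by_cases h : 0 < k
      · have hkpos : (0:ℝ) < k := by exact_mod_cast h
        simp only [h, if_pos, hx]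
        rw [mul_comm]
        apply mul_le_mul_of_nonneg_left _ (hwnn k)
        have e1 : (k:ℝ) ^ (-(α * (m:ℝ))) = ((k:ℝ) ^ (-(m:ℝ))) ^ α := by
          rw [show -(α * (m:ℝ)) = (-(m:ℝ)) * α from by ring, Real.rpow_mul hkpos.le]
        have e2 : (k:ℝ) ^ (-(m:ℝ)) = ((k:ℝ)^m)⁻¹ := by
          rw [Real.rpow_neg hkpos.le, Real.rpow_natCast]
        rw [e1, e2]
        apply Real.rpow_le_rpow (by positivity) _ hα0.le
        rw [inv_eq_one_div, div_le_div_iff₀ (pow_pos hkpos m) (hP k), one_mul]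
        exact prod_le_pow m k h
      · simp only [h, if_neg, hx, if_false]
        rw [Real.zero_rpow hα0.ne']
        simp
    have step2 : ∑ k ∈ range (n+1), w k * (x k) ^ α ≤ (∑ k ∈ range (n+1), w k * x k) ^ α :=
      jensen_aux _ _ _ (fun k _ => hwnn k) (fun k _ => hxnn k) (le_of_eq hsum1) hα0 hα1
    have step3 : ∑ k ∈ range (n+1), w k * x k ≤ X := by
      have e : ∀ k ∈ range (n+1), w k * x k =
          2^T * ((if 0 < k then (∏ i ∈ Icc 1 m, ((k:ℝ)+i))⁻¹ else 0) * w k) := by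
        intro k _
        by_cases h : 0 < k
        · simp only [h, if_pos, hx]
          field_simp
        · simp [h, hx]
      rw [Finset.sum_congr rfl e, ← Finset.mul_sum, hX, mul_div_assoc]
      exact mul_le_mul_of_nonneg_left (sumB n m p hp0 hp1) (by positivity)
    calc (∑ k ∈ Finset.range (n + 1),
        (if 0 < k then ((k : ℝ) ^ (-(α * m)) : ℝ) else 0) * w k)
        ≤ ∑ k ∈ range (n+1), w k * (x k) ^ α := Finset.sum_le_sum step1
      _ ≤ (∑ k ∈ range (n+1), w k * x k) ^ α := step2
      _ ≤ X ^ α := Real.rpow_le_rpow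
          (Finset.sum_nonneg fun k _ => mul_nonneg (hwnn k) (hxnn k)) step3 hα0.le
  · -- second inequality
    have hpn : (0:ℝ) < p * n := by
      have : (1:ℝ) ≤ (n:ℝ) := by exact_mod_cast hn
      nlinarith
    have hXle : X ≤ 2^T / (p * n)^m := by
      rw [hX]
      apply div_le_div₀ (by positivity)
      · nlinarith [pow_nonneg hq0 (n+m), (by positivity : (0:ℝ) ≤ (2:ℝ)^T)]
      · positivity
      · rw [mul_pow]
        apply mul_le_mul_of_nonneg_left _ (pow_pos hp0 m).le
        calc (n:ℝ)^m = ∏ _i ∈ Icc 1 m, (n:ℝ) := by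
              rw [Finset.prod_const, Nat.card_Icc]; norm_num
          _ ≤ ∏ i ∈ Icc 1 m, ((n:ℝ)+i) := by
              apply Finset.prod_le_prod
              · intro i _; positivity
              · intro i _; have : (0:ℝ) ≤ (i:ℝ) := by positivity
                linarith
    calc X ^ α ≤ (2^T / (p * n)^m) ^ α := Real.rpow_le_rpow hXnn hXle hα0.le
      _ = (2:ℝ) ^ (α * (T:ℕ)) / (p * n) ^ (α * m) := by
          rw [Real.div_rpow (by positivity) (by positivity)]
          congr 1
          · rw [← Real.rpow_natCast (2:ℝ) T, ← Real.rpow_mul (by norm_num), mul_comm α ((T:ℕ):ℝ)]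
          · rw [← Real.rpow_natCast (p * (n:ℝ)) m, ← Real.rpow_mul hpn.le, mul_comm α ((m:ℕ):ℝ)]
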